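/- arXiv:1107.2325 — 5 statements merged into one kernel-verified Lean document; each statement's English description precedes it below -/
import Mathlib

section
/- If ξ_1, ξ_2, … are independent random variables taking values in the p-adic integers J_p such that P(ξ_n = λ) = 0 for every n and every λ ∈ J_p, then almost surely the set {ξ_n : n < ω} is algebraically independent over ℚ. -/
open MeasureTheory ProbabilityTheory MvPolynomial

section Aux
variable {p : ℕ} [Fact p.Prime]

noncomputable local instance : MeasurableSpace ℤ_[p] := borel _
local instance : BorelSpace ℤ_[p] := ⟨rfl⟩

lemma finSuccEquiv_map' {R S : Type*} [CommSemiring R] [CommSemiring S] (f : R →+* S) (n : ℕ)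
    (q : MvPolynomial (Fin (n+1)) R) :
    finSuccEquiv S n (MvPolynomial.map f q)
      = Polynomial.map (MvPolynomial.map f) (finSuccEquiv R n q) := by
  ext i m
  simp [finSuccEquiv_coeff_coeff, Polynomial.coeff_map, MvPolynomial.coeff_map]

lemma contEval (n : ℕ) (q : MvPolynomial (Fin n) ℚ) :
    Continuous (fun x : Fin n → ℤ_[p] => aeval (fun i => ((x i : ℤ_[p]) : ℚ_[p])) q) := by
  have h1 : Continuous (fun y : Fin n → ℚ_[p] => eval y (MvPolynomial.map (algebraMap ℚ ℚ_[p]) q)) :=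
    MvPolynomial.continuous_eval _
  have h2 : Continuous (fun x : Fin n → ℤ_[p] => (fun i => ((x i : ℤ_[p]) : ℚ_[p]))) :=
    continuous_pi fun i => continuous_subtype_val.comp (continuous_apply i)
  have := h1.comp h2
  convert this using 2 with x
  rw [aeval_def, eval₂_eq_eval_map]; rfl

lemma measurableSetEval (n : ℕ) (q : MvPolynomial (Fin n) ℚ) :
    MeasurableSet {x : Fin n → ℤ_[p] | aeval (fun i => ((x i : ℤ_[p]) : ℚ_[p])) q = 0} := by
  have : {x : Fin n → ℤ_[p] | aeval (fun i => ((x i : ℤ_[p]) : ℚ_[p])) q = 0}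
      = (fun x : Fin n → ℤ_[p] => aeval (fun i => ((x i : ℤ_[p]) : ℚ_[p])) q) ⁻¹' {0} := rfl
  rw [this]
  exact ((isClosed_singleton).preimage (contEval n q)).measurableSet

lemma key : ∀ (n : ℕ) (μ : Fin n → Measure ℤ_[p]), (∀ i, IsProbabilityMeasure (μ i)) →
    (∀ i, NoAtoms (μ i)) → ∀ (q : MvPolynomial (Fin n) ℚ), q ≠ 0 →
    Measure.pi μ {x | aeval (fun i => ((x i : ℤ_[p]) : ℚ_[p])) q = 0} = 0 := by
  intro n
  induction n with
  | zero =>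
    intro μ hprob hatoms q hq
    obtain ⟨c, rfl⟩ := C_surjective (Fin 0) q
    have hc : c ≠ 0 := fun h => hq (by rw [h, map_zero])
    have : {x : Fin 0 → ℤ_[p] | aeval (fun i => ((x i : ℤ_[p]) : ℚ_[p])) (C c) = 0} = ∅ := by
      ext x
      simp only [Set.mem_setOf_eq, aeval_C, Set.mem_empty_iff_false, iff_false]
      exact fun h => hc ((map_eq_zero (algebraMap ℚ ℚ_[p])).mp h)
    rw [this]; exact measure_empty
  | succ n ih =>
    intro μ hprob hatoms q hq
    haveI := hprob
    haveI : ∀ i, SigmaFinite (μ i) := fun i => inferInstance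
    set ν : Measure (Fin n → ℤ_[p]) := Measure.pi (fun j : Fin n => μ j.succ) with hν
    haveI : IsProbabilityMeasure ν := by infer_instance
    set S : Set (Fin (n+1) → ℤ_[p]) :=
      {x | aeval (fun i => ((x i : ℤ_[p]) : ℚ_[p])) q = 0} with hS
    have hSm : MeasurableSet S := measurableSetEval (n+1) q
    set e := MeasurableEquiv.piFinSuccAbove (fun _ : Fin (n+1) => ℤ_[p]) 0 with he
    have hmp := measurePreserving_piFinSuccAbove μ 0
    set T : Set (ℤ_[p] × (Fin n → ℤ_[p])) := e.symm ⁻¹' S with hT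
    have hTm : MeasurableSet T := e.symm.measurable hSm
    have hpre : e ⁻¹' T = S := by
      rw [hT, ← Set.preimage_comp]
      simp [Set.preimage_comp, MeasurableEquiv.symm_comp_self]
    have h1 : Measure.pi μ S = ((μ 0).prod ν) T := by
      rw [← hpre]
      have := hmp.measure_preimage hTm.nullMeasurableSet
      convert this using 2
      simp only [hν, Fin.succAbove_zero]
    -- polynomial decomposition
    set F := finSuccEquiv ℚ n q with hFdef
    have hFne : F ≠ 0 := fun h => hq ((map_eq_zero_iff _ (finSuccEquiv ℚ n).injective).mp h)
    set c0 := F.leadingCoeff with hc0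
    have hc0ne : c0 ≠ 0 := Polynomial.leadingCoeff_ne_zero.mpr hFne
    have hNnull : ν {z : Fin n → ℤ_[p] | aeval (fun j => ((z j : ℤ_[p]) : ℚ_[p])) c0 = 0} = 0 :=
      ih _ (fun j => hprob _) (fun j => hatoms _) c0 hc0ne
    have hsec : ∀ z : Fin n → ℤ_[p],
        aeval (fun j => ((z j : ℤ_[p]) : ℚ_[p])) c0 ≠ 0 →
        μ 0 ((fun y => (y, z)) ⁻¹' T) = 0 := by
      intro z hz
      set g : Polynomial ℚ_[p] :=
        Polynomial.map (eval (fun j => ((z j : ℤ_[p]) : ℚ_[p])))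
          (Polynomial.map (MvPolynomial.map (algebraMap ℚ ℚ_[p])) F) with hg
      have hmem : ∀ y : ℤ_[p], (y, z) ∈ T ↔ Polynomial.eval ((y : ℚ_[p])) g = 0 := by
        intro y
        have hsymm : e.symm (y, z) = Fin.cons y z := by
          ext i
          refine Fin.cases ?_ (fun j => ?_) i <;>
            simp [he, MeasurableEquiv.piFinSuccAbove]
        have : ((y, z) ∈ T) ↔ aeval (fun i => (((Fin.cons y z : Fin (n+1) → ℤ_[p]) i : ℤ_[p]) : ℚ_[p])) q = 0 := by
          rw [hT, Set.mem_preimage, hsymm, hS, Set.mem_setOf_eq]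
        rw [this]
        have hcoe : (fun i => (((Fin.cons y z : Fin (n+1) → ℤ_[p]) i : ℤ_[p]) : ℚ_[p]))
            = Fin.cons ((y : ℚ_[p])) (fun j => ((z j : ℤ_[p]) : ℚ_[p])) := by
          ext i
          refine Fin.cases ?_ (fun j => ?_) i <;> simp
        rw [aeval_def, eval₂_eq_eval_map, hcoe, eval_eq_eval_mv_eval',
          finSuccEquiv_map', Polynomial.map_map, ← hFdef, ← Polynomial.map_map, ← hg]
      have hgne : g ≠ 0 := by
        intro h
        apply hz
        have hcz : g.coeff F.natDegree = 0 := by rw [h]; simp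
        rw [hg] at hcz
        simp only [Polynomial.coeff_map] at hcz
        rw [aeval_def, eval₂_eq_eval_map]
        rw [hc0, Polynomial.leadingCoeff]
        exact hcz
      have hsub : ((fun y => (y, z)) ⁻¹' T) ⊆ (fun y : ℤ_[p] => (y : ℚ_[p])) ⁻¹' {w | g.IsRoot w} := by
        intro y hy
        exact (hmem y).mp hy
      refine measure_mono_null hsub ?_
      haveI : NullSingletonClass (μ 0) := hatoms 0
      exact @Set.Countable.measure_zero _ _ _ (((Polynomial.finite_setOf_isRoot hgne).preimage
        (Subtype.val_injective.injOn)).countable) _ (hatoms _)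
    rw [h1, Measure.prod_apply_symm hTm]
    have hae : (fun z => μ 0 ((fun y => (y, z)) ⁻¹' T)) =ᵐ[ν] (fun _ => 0) := by
      have h0 : ∀ᵐ z ∂ν, z ∉ {z : Fin n → ℤ_[p] | aeval (fun j => ((z j : ℤ_[p]) : ℚ_[p])) c0 = 0} :=
        measure_eq_zero_iff_ae_notMem.mp hNnull
      filter_upwards [h0] with z hz
      exact hsec z hz
    rw [lintegral_congr_ae hae, lintegral_zero]

lemma mapEqPi {Ω : Type*} [MeasurableSpace Ω] (P : Measure Ω) [IsProbabilityMeasure P]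
    (ξ : ℕ → Ω → ℤ_[p]) (hmeas : ∀ n, Measurable (ξ n))
    (hindep : @iIndepFun Ω ℕ _ (fun _ => ℤ_[p]) (fun _ => borel ℤ_[p]) ξ P) (n : ℕ) (f : Fin n → ℕ)
    (hf : Function.Injective f) :
    P.map (fun ω i => ξ (f i) ω) = Measure.pi (fun i => P.map (ξ (f i))) := by
  haveI : ∀ i : Fin n, IsProbabilityMeasure (P.map (ξ (f i))) :=
    fun i => Measure.isProbabilityMeasure_map (hmeas (f i)).aemeasurable
  haveI : ∀ i : Fin n, SigmaFinite (P.map (ξ (f i))) := fun i => inferInstance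
  symm
  apply Measure.pi_eq
  intro s hs
  have hFm : Measurable (fun ω => (fun i => ξ (f i) ω : Fin n → ℤ_[p])) :=
    measurable_pi_lambda _ fun i => hmeas (f i)
  rw [Measure.map_apply hFm (MeasurableSet.univ_pi hs)]
  have hpre : (fun ω => (fun i => ξ (f i) ω : Fin n → ℤ_[p])) ⁻¹' Set.pi Set.univ s
      = ⋂ i : Fin n, ξ (f i) ⁻¹' s i := by
    ext ω; simp [Set.mem_pi]
  rw [hpre]
  set sets : ℕ → Set ℤ_[p] := fun m => ⋂ (i : Fin n) (_ : f i = m), s i with hsets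
  have hsetsf : ∀ i : Fin n, sets (f i) = s i := by
    intro i
    apply Set.Subset.antisymm
    · intro x hx
      simp only [hsets, Set.mem_iInter] at hx
      exact hx i rfl
    · intro x hx
      simp only [hsets, Set.mem_iInter]
      intro j hj
      cases hf hj
      exact hx
  have hsetsm : ∀ m, MeasurableSet (sets m) := by
    intro m
    exact MeasurableSet.iInter fun i => MeasurableSet.iInter fun h => hs i
  have hinter : (⋂ m ∈ Finset.image f Finset.univ, ξ m ⁻¹' sets m)
      = ⋂ i : Fin n, ξ (f i) ⁻¹' s i := by
    ext ω
    simp only [Set.mem_iInter, Finset.mem_image, Finset.mem_univ, true_and, Set.mem_preimage]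
    constructor
    · intro h i
      have := h (f i) ⟨i, rfl⟩
      rwa [hsetsf i] at this
    · rintro h m ⟨i, rfl⟩
      rw [hsetsf i]
      exact h i
  rw [← hinter]
  rw [hindep.measure_inter_preimage_eq_mul (Finset.image f Finset.univ)
    (fun m _ => hsetsm m)]
  rw [Finset.prod_image (fun i _ j _ h => hf h)]
  refine Finset.prod_congr rfl fun i _ => ?_
  rw [Measure.map_apply (hmeas (f i)) (hs i), hsetsf i]

theorem stmt_5 {p : ℕ} [Fact p.Prime] {Ω : Type*} [MeasurableSpace Ω]
    (P : Measure Ω) [IsProbabilityMeasure P]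
    (ξ : ℕ → Ω → ℤ_[p])
    (hmeas : ∀ n, @Measurable Ω ℤ_[p] _ (borel ℤ_[p]) (ξ n))
    (hindep : @iIndepFun Ω ℕ _ (fun _ => ℤ_[p]) (fun _ => borel ℤ_[p]) ξ P)
    (hatom : ∀ n (lam : ℤ_[p]), P {ω | ξ n ω = lam} = 0) :
    ∀ᵐ ω ∂P, AlgebraicIndependent ℚ (fun n => ((ξ n ω : ℤ_[p]) : ℚ_[p])) := by
  haveI : Countable (MvPolynomial ℕ ℚ) := by
    delta MvPolynomial; exact AddMonoidAlgebra.coeff_injective.countable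
  rw [ae_iff]
  have hq0 : ∀ q : MvPolynomial ℕ ℚ, q ≠ 0 →
      P {ω | aeval (fun m => ((ξ m ω : ℤ_[p]) : ℚ_[p])) q = 0} = 0 := by
    intro q hq
    obtain ⟨n, f, hfinj, q', rfl⟩ := exists_fin_rename q
    have hq' : q' ≠ 0 := by
      rintro rfl; exact hq (map_zero _)
    have hset : {ω | aeval (fun m => ((ξ m ω : ℤ_[p]) : ℚ_[p])) (rename f q') = 0}
        = (fun ω => (fun i => ξ (f i) ω : Fin n → ℤ_[p])) ⁻¹'
          {x : Fin n → ℤ_[p] | aeval (fun i => ((x i : ℤ_[p]) : ℚ_[p])) q' = 0} := by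
      ext ω
      simp only [Set.mem_setOf_eq, Set.mem_preimage, aeval_rename]
      rfl
    rw [hset]
    have hFm : Measurable (fun ω => (fun i => ξ (f i) ω : Fin n → ℤ_[p])) :=
      measurable_pi_lambda _ fun i => hmeas (f i)
    rw [← Measure.map_apply hFm (measurableSetEval n q'),
      mapEqPi P ξ hmeas hindep n f hfinj]
    refine key n _ (fun i => Measure.isProbabilityMeasure_map (hmeas (f i)).aemeasurable)
      (fun i => ⟨fun lam => ?_⟩) q' hq'
    rw [Measure.map_apply (hmeas (f i)) (measurableSet_singleton lam)]
    exact hatom (f i) lam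
  refine measure_mono_null (fun ω hω => ?_)
    (measure_iUnion_null (s := fun q : {q : MvPolynomial ℕ ℚ // q ≠ 0} =>
      {ω | aeval (fun m => ((ξ m ω : ℤ_[p]) : ℚ_[p])) q.1 = 0}) fun q => hq0 q.1 q.2)
  simp only [Set.mem_setOf_eq] at hω
  rw [algebraicIndependent_iff] at hω
  push_neg at hω
  obtain ⟨q, hq1, hq2⟩ := hω
  exact Set.mem_iUnion.mpr ⟨⟨q, hq2⟩, hq1⟩

end Aux
end

section
/- A nonzero polynomial g with coefficients in J_p that has no root in J_p satisfies: there exists M such that p^M does not divide g(x) for any x in J_p; equivalently, the p-adic valuation of g(x) is bounded uniformly over x ∈ J_p. -/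
theorem stmt_6 {p : ℕ} [Fact p.Prime] (g : Polynomial ℤ_[p]) (hg : g ≠ 0)
    (hroot : ∀ x : ℤ_[p], Polynomial.eval x g ≠ 0) :
    ∃ M : ℕ, ∀ x : ℤ_[p], ¬ ((p : ℤ_[p]) ^ M ∣ Polynomial.eval x g) := by
  have hcont : Continuous fun x : ℤ_[p] => ‖Polynomial.eval x g‖ :=
    (Polynomial.continuous g).norm
  obtain ⟨x₀, -, hx₀⟩ := isCompact_univ.exists_isMinOn (Set.univ_nonempty)
    hcont.continuousOn
  set c : ℝ := ‖Polynomial.eval x₀ g‖ with hc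
  have hcpos : 0 < c := norm_pos_iff.mpr (hroot x₀)
  have hp1 : (1 : ℝ) < p := Nat.one_lt_cast.mpr (Fact.out : p.Prime).one_lt
  obtain ⟨M, hM⟩ := exists_pow_lt_of_lt_one hcpos (by
    rw [one_div]; exact inv_lt_one_of_one_lt₀ hp1 : (1 / (p : ℝ)) < 1)
  refine ⟨M, fun x hdvd => ?_⟩
  obtain ⟨y, hy⟩ := hdvd
  have h1 : ‖Polynomial.eval x g‖ ≤ ((p : ℝ))⁻¹ ^ M := by
    rw [hy, norm_mul, PadicInt.norm_p_pow, zpow_neg, ← zpow_natCast,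
      ← inv_zpow, zpow_natCast]
    calc ((p:ℝ)⁻¹) ^ M * ‖y‖ ≤ ((p:ℝ)⁻¹) ^ M * 1 := by
          gcongr; exact PadicInt.norm_le_one y
      _ = ((p:ℝ)⁻¹) ^ M := mul_one _
  have h2 : c ≤ ‖Polynomial.eval x g‖ := hx₀ (Set.mem_univ x)
  have := h2.trans h1
  rw [one_div] at hM
  linarith
end

section
/- Let g(x) = h(x) · ∏_{i=1}^{l} (x − λ_i) with h ∈ J_p[x] having no root in J_p, λ_i ∈ J_p, and let M be such that p^M does not divide h(x) for any x ∈ J_p. Then the number of residues x mod p^N with g(x) ≡ 0 (mod p^N) is at most l · p^{N − ⌊(N−M)/l⌋}. -/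
theorem stmt_7 {p : ℕ} [Fact p.Prime] (l M N : ℕ) (hMN : M ≤ N) (hM : 0 < M)
    (h : Polynomial ℤ_[p]) (lam : Fin l → ℤ_[p])
    (hh : ∀ x : ℤ_[p], ¬ ((p : ℤ_[p]) ^ M ∣ Polynomial.eval x h))
    (g : Polynomial ℤ_[p])
    (hg : g = h * ∏ i : Fin l, (Polynomial.X - Polynomial.C (lam i))) :
    Nat.card
        ((Ideal.Quotient.mk (Ideal.span {(p : ℤ_[p]) ^ N})) ''
          {x : ℤ_[p] | (p : ℤ_[p]) ^ N ∣ Polynomial.eval x g}) ≤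
      l * p ^ (N - (N - M) / l) := by
  have heval : ∀ x : ℤ_[p], Polynomial.eval x g
      = Polynomial.eval x h * ∏ i : Fin l, (x - lam i) := by
    intro x
    simp [hg, Polynomial.eval_prod]
  rcases Nat.eq_zero_or_pos l with hl | hl
  · -- l = 0 : the solution set is empty
    subst hl
    have hempty : {x : ℤ_[p] | (p : ℤ_[p]) ^ N ∣ Polynomial.eval x g} = ∅ := by
      ext x
      simp only [Set.mem_setOf_eq, Set.mem_empty_iff_false, iff_false]
      intro hx
      refine hh x (dvd_trans (pow_dvd_pow _ hMN) ?_)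
      rwa [heval x, Finset.univ_eq_empty, Finset.prod_empty, mul_one] at hx
    simp [hempty]
  · set k := (N - M) / l with hk
    have hkNM : k ≤ N - M := Nat.div_le_self _ _
    have hkN : k ≤ N := hkNM.trans (Nat.sub_le _ _)
    -- key: every solution is close to some root
    have key : ∀ x : ℤ_[p], (p : ℤ_[p]) ^ N ∣ Polynomial.eval x g →
        ∃ i : Fin l, (p : ℤ_[p]) ^ k ∣ x - lam i := by
      intro x hx
      rcases Nat.eq_zero_or_pos k with hk0 | hk0
      · exact ⟨⟨0, hl⟩, by simp [hk0]⟩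
      by_contra hcon
      push_neg at hcon
      have hp : Prime (p : ℤ_[p]) := PadicInt.prime_p
      rw [heval x] at hx
      have hN : (N : ℕ∞) ≤ emultiplicity (p : ℤ_[p]) (Polynomial.eval x h * ∏ i : Fin l, (x - lam i)) :=
        le_emultiplicity_of_pow_dvd hx
      rw [emultiplicity_mul hp, Finset.emultiplicity_prod hp] at hN
      have hA : emultiplicity (p : ℤ_[p]) (Polynomial.eval x h) ≤ ((M - 1 : ℕ) : ℕ∞) := by
        have := emultiplicity_lt_iff_not_dvd.2 (hh x)
        have hM' : ((M : ℕ) : ℕ∞) = ((M - 1 : ℕ) : ℕ∞) + 1 := by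
          exact_mod_cast (by omega : M = M - 1 + 1)
        rw [hM'] at this
        exact Order.le_of_lt_add_one this
      have hB : ∀ i : Fin l, emultiplicity (p : ℤ_[p]) (x - lam i) ≤ ((k - 1 : ℕ) : ℕ∞) := by
        intro i
        have := emultiplicity_lt_iff_not_dvd.2 (hcon i)
        have hk' : ((k : ℕ) : ℕ∞) = ((k - 1 : ℕ) : ℕ∞) + 1 := by
          exact_mod_cast (by omega : k = k - 1 + 1)
        rw [hk'] at this
        exact Order.le_of_lt_add_one this
      have hsum : ∑ i : Fin l, emultiplicity (p : ℤ_[p]) (x - lam i)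
          ≤ ((l * (k - 1) : ℕ) : ℕ∞) := by
        calc ∑ i : Fin l, emultiplicity (p : ℤ_[p]) (x - lam i)
            ≤ ∑ _i : Fin l, ((k - 1 : ℕ) : ℕ∞) := Finset.sum_le_sum fun i _ => hB i
          _ = ((l * (k - 1) : ℕ) : ℕ∞) := by
              simp [Finset.sum_const, mul_comm]
      have hfin : (N : ℕ∞) ≤ ((M - 1 + l * (k - 1) : ℕ) : ℕ∞) := by
        push_cast
        exact hN.trans (add_le_add hA hsum)
      rw [Nat.cast_le] at hfin
      have hdiv : k * l ≤ N - M := Nat.div_mul_le_self _ _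
      have hmul : l * (k - 1) + l = l * k := by
        rw [← Nat.mul_succ]
        congr 1
        omega
      have : l * k = k * l := Nat.mul_comm _ _
      omega
    -- covering map
    set Q := Ideal.Quotient.mk (Ideal.span {(p : ℤ_[p]) ^ N}) with hQ
    set f : Fin l × Fin (p ^ (N - k)) → ℤ_[p] ⧸ Ideal.span {(p : ℤ_[p]) ^ N} :=
      fun ij => Q (lam ij.1 + (p : ℤ_[p]) ^ k * (ij.2 : ℕ)) with hf
    have hsub : Q '' {x : ℤ_[p] | (p : ℤ_[p]) ^ N ∣ Polynomial.eval x g} ⊆ Set.range f := by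
      rintro y ⟨x, hx, rfl⟩
      obtain ⟨i, hi⟩ := key x hx
      obtain ⟨c, hc⟩ := hi
      refine ⟨⟨i, ⟨c.appr (N - k), PadicInt.appr_lt c (N - k)⟩⟩, ?_⟩
      simp only [hf]
      rw [Ideal.Quotient.eq, Ideal.mem_span_singleton]
      have hspec := PadicInt.appr_spec (N - k) c
      rw [Ideal.mem_span_singleton] at hspec
      obtain ⟨d, hd⟩ := hspec
      have : lam i + (p : ℤ_[p]) ^ k * (c.appr (N - k) : ℕ) - x
          = (p : ℤ_[p]) ^ N * (-d) := by
        have hx' : x = lam i + (p : ℤ_[p]) ^ k * c := by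
          linear_combination hc
        rw [hx']
        have hNk : (p : ℤ_[p]) ^ N = (p : ℤ_[p]) ^ k * (p : ℤ_[p]) ^ (N - k) := by
          rw [← pow_add, Nat.add_sub_cancel' hkN]
        rw [hNk]
        linear_combination (-(p : ℤ_[p]) ^ k) * hd
      rw [this]
      exact Dvd.intro _ rfl
    calc Nat.card (Q '' {x : ℤ_[p] | (p : ℤ_[p]) ^ N ∣ Polynomial.eval x g})
        ≤ Nat.card (Set.range f) := Nat.card_mono (Set.finite_range f) hsub
      _ ≤ Nat.card (Fin l × Fin (p ^ (N - k))) := Finite.card_range_le f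
      _ = l * p ^ (N - (N - M) / l) := by
          simp [Nat.card_eq_fintype_card, hk]
end

section
/- Let b_1, …, b_k be elements of the p-adic completion B̂ of a free abelian group B of countable rank, and let a be a random element of B̂ such that for some α > 1 and all n, the distribution of a mod p^n B̂ gives each class probability at most p^{−n^α}. Then the probability that a lies in the J_p-submodule of B̂ generated by b_1, …, b_k is 0. -/
open MeasureTheory ENNReal Pointwise

/-- The p-adic completion of the free abelian group `B = ⊕_{n<ω} ℤ` of countable rank. -/
noncomputable abbrev PadicCompletionOfFree (p : ℕ) :=
  AdicCompletion (Ideal.span {(p : ℤ)}) (ℕ →₀ ℤ)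

/-- The ring of p-adic integers, as the p-adic completion of ℤ. -/
noncomputable abbrev PadicIntRing (p : ℕ) :=
  AdicCompletion (Ideal.span {(p : ℤ)}) ℤ

section Aux

open AdicCompletion

lemma aux_memI (p m : ℕ) (x : ℤ) :
    x ∈ ((Ideal.span {(p:ℤ)}) ^ m • ⊤ : Submodule ℤ ℤ) ↔ (p:ℤ)^m ∣ x := by
  rw [smul_eq_mul, Ideal.mul_top, Ideal.span_singleton_pow, Ideal.mem_span_singleton]

/-- Every element of the `p`-adic integers is congruent to an integer in `[0, p^n)`
modulo `p^n`. -/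
lemma aux_lemA (p : ℕ) (hp : 0 < p) (μ : AdicCompletion (Ideal.span {(p:ℤ)}) ℤ) (n : ℕ) :
    ∃ (c : ℤ) (ν : AdicCompletion (Ideal.span {(p:ℤ)}) ℤ),
      0 ≤ c ∧ c < (p:ℤ)^n ∧ μ = algebraMap ℤ _ c + (p:ℤ)^n • ν := by
  obtain ⟨f, hf⟩ := AdicCompletion.mk_surjective (Ideal.span {(p:ℤ)}) ℤ μ
  have hpn : (0:ℤ) < (p:ℤ)^n := by positivity
  set c : ℤ := (f n) % ((p:ℤ)^n) with hc
  have hdvd : ∀ m, (p:ℤ)^n ∣ f (n + m) - c := by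
    intro m
    have h1 : f n ≡ f (n+m) [SMOD ((Ideal.span {(p:ℤ)}) ^ n • ⊤ : Submodule ℤ ℤ)] :=
      f.property (by omega)
    have h2 : (p:ℤ)^n ∣ f n - f (n + m) := (aux_memI p n _).mp (SModEq.sub_mem.mp h1)
    have h3 : (p:ℤ)^n ∣ f n - c := by
      simpa [hc] using Int.dvd_self_sub_of_emod_eq rfl
    have key : f (n+m) - c = (f n - c) - (f n - f (n + m)) := by ring
    rw [key]; exact dvd_sub h3 h2
  set g : ℕ → ℤ := fun m => (f (n + m) - c) / (p:ℤ)^n with hg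
  have hgmul : ∀ m, (p:ℤ)^n * g m = f (n + m) - c := fun m => Int.mul_ediv_cancel' (hdvd m)
  have hgc : ∀ m, f m ≡ c + (p:ℤ)^n * g m
      [SMOD ((Ideal.span {(p:ℤ)}) ^ m • ⊤ : Submodule ℤ ℤ)] := by
    intro m
    rw [SModEq.sub_mem, aux_memI]
    have h1 : f m ≡ f (n+m) [SMOD ((Ideal.span {(p:ℤ)}) ^ m • ⊤ : Submodule ℤ ℤ)] :=
      f.property (by omega)
    have h2 : (p:ℤ)^m ∣ f m - f (n + m) := (aux_memI p m _).mp (SModEq.sub_mem.mp h1)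
    rw [hgmul m]
    have : f m - (c + (f (n + m) - c)) = f m - f (n+m) := by ring
    rw [this]
    exact h2
  have hcauchy : IsAdicCauchy (Ideal.span {(p:ℤ)}) ℤ g := by
    rw [isAdicCauchy_iff]
    intro m
    rw [SModEq.sub_mem, aux_memI]
    have h1 : f (n+m) ≡ f (n+(m+1)) [SMOD ((Ideal.span {(p:ℤ)}) ^ (n+m) • ⊤ : Submodule ℤ ℤ)] :=
      f.property (by omega)
    have h2 : (p:ℤ)^(n+m) ∣ f (n+m) - f (n + (m+1)) :=
      (aux_memI p (n+m) _).mp (SModEq.sub_mem.mp h1)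
    have h3 : (p:ℤ)^n * (g m - g (m+1)) = f (n+m) - f (n+(m+1)) := by
      rw [mul_sub, hgmul, hgmul]; ring
    rw [pow_add] at h2
    rw [← h3] at h2
    exact (mul_dvd_mul_iff_left (by positivity : (p:ℤ)^n ≠ 0)).mp h2
  refine ⟨c, AdicCompletion.mk (Ideal.span {(p:ℤ)}) ℤ ⟨g, hcauchy⟩,
    Int.emod_nonneg _ (by positivity), Int.emod_lt_of_pos _ hpn, ?_⟩
  rw [← hf]
  apply AdicCompletion.ext
  intro m
  have e1 : ((mk (Ideal.span {(p:ℤ)}) ℤ) f).val m = Submodule.Quotient.mk (f m) := rfl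
  have e2 : ((algebraMap ℤ (AdicCompletion (Ideal.span {(p:ℤ)}) ℤ)) c
      + (p:ℤ)^n • (mk (Ideal.span {(p:ℤ)}) ℤ ⟨g, hcauchy⟩)).val m
      = Submodule.Quotient.mk c + (p:ℤ)^n • Submodule.Quotient.mk (g m) := rfl
  rw [e1, e2, ← Submodule.Quotient.mk_smul, ← Submodule.Quotient.mk_add, smul_eq_mul]
  exact SModEq.def.mp (hgc m)

/-- Modulo `p^n`, every element of the `J_p`-span of `b` is congruent to a sum with
integer coefficients in `[0, p^n)`. -/
lemma aux_cover (p : ℕ) (hp : 0 < p) (k : ℕ) (b : Fin k → PadicCompletionOfFree p)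
    (n : ℕ) (y : PadicCompletionOfFree p)
    (hy : y ∈ Submodule.span (PadicIntRing p) (Set.range b)) :
    ∃ f : Fin k → Fin (p^n),
      Submodule.Quotient.mk (p := (((p : ℤ) ^ n • ⊤ :
          Submodule ℤ (PadicCompletionOfFree p)))) y =
        Submodule.Quotient.mk (∑ i, ((f i : ℕ) : ℤ) • b i) := by
  rw [Submodule.mem_span_range_iff_exists_fun] at hy
  obtain ⟨μ, hμ⟩ := hy
  choose c ν h0 hlt hrep using fun i => aux_lemA p hp (μ i) n
  have hpn : 0 < p ^ n := Nat.pow_pos hp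
  refine ⟨fun i => ⟨(c i).toNat, by
    have h1 : c i < ((p^n : ℕ) : ℤ) := by exact_mod_cast hlt i
    have h2 := h0 i
    omega⟩, ?_⟩
  have hcast : ∀ i, (((c i).toNat : ℕ) : ℤ) = c i := fun i => Int.toNat_of_nonneg (h0 i)
  rw [Submodule.Quotient.eq]
  have key : y - (∑ i, ((c i).toNat : ℤ) • b i)
      = (p:ℤ)^n • (∑ i, ν i • b i) := by
    rw [← hμ, Finset.smul_sum, ← Finset.sum_sub_distrib]
    refine Finset.sum_congr rfl (fun i _ => ?_)
    rw [hcast i, hrep i, add_smul, smul_assoc, algebraMap_smul]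
    abel
  rw [key]
  exact Submodule.smul_mem_pointwise_smul _ _ _ Submodule.mem_top

end Aux

theorem stmt_8 (p : ℕ) (hp : p.Prime) {Ω : Type*} [MeasurableSpace Ω]
    (P : Measure Ω) [IsProbabilityMeasure P]
    (k : ℕ) (b : Fin k → PadicCompletionOfFree p)
    (a : Ω → PadicCompletionOfFree p) (α : ℝ) (hα : 1 < α)
    (hdist : ∀ n : ℕ,
      ∀ x : PadicCompletionOfFree p ⧸ (((p : ℤ) ^ n • ⊤ : Submodule ℤ (PadicCompletionOfFree p))),
        P {ω | Submodule.Quotient.mk (a ω) = x} ≤ ENNReal.ofReal ((p : ℝ) ^ (-((n : ℝ) ^ α)))) :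
    P {ω | a ω ∈ Submodule.span (PadicIntRing p) (Set.range b)} = 0 := by
  have hp0 : 0 < p := hp.pos
  have hp1 : (1:ℝ) < (p:ℝ) := by exact_mod_cast hp.one_lt
  have hpR : (0:ℝ) < (p:ℝ) := by positivity
  set E := {ω | a ω ∈ Submodule.span (PadicIntRing p) (Set.range b)} with hE
  -- the key bound
  have key : ∀ n : ℕ, P E ≤ (((p^n)^k : ℕ) : ℝ≥0∞) * ENNReal.ofReal ((p : ℝ) ^ (-((n : ℝ) ^ α))) := by
    intro n
    have hsub : E ⊆ ⋃ (f : Fin k → Fin (p^n)),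
        {ω | Submodule.Quotient.mk (p := (((p : ℤ) ^ n • ⊤ :
            Submodule ℤ (PadicCompletionOfFree p)))) (a ω)
          = Submodule.Quotient.mk (∑ i, ((f i : ℕ) : ℤ) • b i)} := by
      intro ω hω
      obtain ⟨f, hf⟩ := aux_cover p hp0 k b n (a ω) hω
      exact Set.mem_iUnion.mpr ⟨f, hf⟩
    calc P E ≤ P (⋃ (f : Fin k → Fin (p^n)), _) := measure_mono hsub
      _ ≤ ∑ f : Fin k → Fin (p^n), P {ω | Submodule.Quotient.mk (p := (((p : ℤ) ^ n • ⊤ :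
            Submodule ℤ (PadicCompletionOfFree p)))) (a ω)
          = Submodule.Quotient.mk (∑ i, ((f i : ℕ) : ℤ) • b i)} := measure_iUnion_fintype_le _ _
      _ ≤ ∑ _f : Fin k → Fin (p^n), ENNReal.ofReal ((p : ℝ) ^ (-((n : ℝ) ^ α))) :=
          Finset.sum_le_sum (fun f _ => hdist n _)
      _ = (((p^n)^k : ℕ) : ℝ≥0∞) * ENNReal.ofReal ((p : ℝ) ^ (-((n : ℝ) ^ α))) := by
          rw [Finset.sum_const, nsmul_eq_mul]
          congr 1
          simp [Fintype.card_fun]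
  -- rewrite the bound as ofReal of a real power
  have keyR : ∀ n : ℕ, P E ≤ ENNReal.ofReal ((p : ℝ) ^ (((n * k : ℕ) : ℝ) - (n : ℝ) ^ α)) := by
    intro n
    refine (key n).trans (le_of_eq ?_)
    rw [← ENNReal.ofReal_natCast, ← ENNReal.ofReal_mul (by positivity)]
    congr 1
    push_cast
    rw [← pow_mul, ← Real.rpow_natCast (p:ℝ) (n*k), ← Real.rpow_add hpR]
    congr 1
    push_cast
    ring
  -- the bound tends to 0
  have hexp : Filter.Tendsto (fun n : ℕ => ((n * k : ℕ) : ℝ) - (n : ℝ) ^ α)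
      Filter.atTop Filter.atBot := by
    rw [← Filter.tendsto_neg_atTop_iff]
    have h1 : Filter.Tendsto (fun n : ℕ => (n : ℝ) ^ (α - 1)) Filter.atTop Filter.atTop :=
      (tendsto_rpow_atTop (by linarith : (0:ℝ) < α - 1)).comp tendsto_natCast_atTop_atTop
    have h2 : ∀ᶠ n : ℕ in Filter.atTop, (n : ℝ) ≤ -(((n * k : ℕ) : ℝ) - (n : ℝ) ^ α) := by
      filter_upwards [h1.eventually_ge_atTop ((k : ℝ) + 1),
        Filter.eventually_ge_atTop 1] with n hn hn1
      have hn0 : (0:ℝ) < (n : ℝ) := by exact_mod_cast hn1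
      have hna : (n : ℝ) ^ α = (n : ℝ) * (n : ℝ) ^ (α - 1) := by
        rw [← Real.rpow_one_add' (le_of_lt hn0) (by simp; linarith)]
        ring_nf
      have : (n : ℝ) * ((k : ℝ) + 1) ≤ (n : ℝ) ^ α := by
        rw [hna]
        exact mul_le_mul_of_nonneg_left hn (le_of_lt hn0)
      push_cast
      nlinarith
    exact Filter.tendsto_atTop_mono' _ h2 tendsto_natCast_atTop_atTop
  have htend : Filter.Tendsto
      (fun n : ℕ => ENNReal.ofReal ((p : ℝ) ^ (((n * k : ℕ) : ℝ) - (n : ℝ) ^ α)))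
      Filter.atTop (nhds 0) := by
    rw [← ENNReal.ofReal_zero]
    apply ENNReal.tendsto_ofReal
    have : ∀ n : ℕ, (p : ℝ) ^ (((n * k : ℕ) : ℝ) - (n : ℝ) ^ α)
        = Real.exp (Real.log p * (((n * k : ℕ) : ℝ) - (n : ℝ) ^ α)) := fun n =>
      Real.rpow_def_of_pos hpR _
    simp_rw [this]
    exact Real.tendsto_exp_atBot.comp (Filter.Tendsto.const_mul_atBot
      (Real.log_pos hp1) hexp)
  exact le_zero_iff.mp (ge_of_tendsto' htend keyR)
end

section
/- (Pontryagin's criterion) A countable torsion-free abelian group is free if and only if every finite-rank subgroup is free, where finite rank means the subgroup embeds in a finite-dimensional ℚ-vector space (equivalently, has finite maximal number of ℤ-linearly independent elements). -/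
open Submodule Set

section Aux

variable {G : Type*} [AddCommGroup G]

/-- The saturation (pure closure) of a submodule. -/
def satAux (A : Submodule ℤ G) : Submodule ℤ G where
  carrier := {x | ∃ k : ℤ, k ≠ 0 ∧ k • x ∈ A}
  zero_mem' := ⟨1, one_ne_zero, by simp⟩
  add_mem' := by
    rintro x y ⟨k, hk, hkx⟩ ⟨l, hl, hly⟩
    refine ⟨k * l, mul_ne_zero hk hl, ?_⟩
    have : (k * l) • (x + y) = l • (k • x) + k • (l • y) := by
      rw [smul_add]
      rw [smul_smul, smul_smul, mul_comm l k]
    rw [this]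
    exact A.add_mem (A.smul_mem _ hkx) (A.smul_mem _ hly)
  smul_mem' := by
    rintro c x ⟨k, hk, hkx⟩
    exact ⟨k, hk, by rw [smul_comm]; exact A.smul_mem c hkx⟩

lemma mem_satAux {A : Submodule ℤ G} {x : G} :
    x ∈ satAux A ↔ ∃ k : ℤ, k ≠ 0 ∧ k • x ∈ A := Iff.rfl

lemma le_satAux (A : Submodule ℤ G) : A ≤ satAux A :=
  fun x hx => ⟨1, one_ne_zero, by simpa using hx⟩

lemma satAux_mono {A B : Submodule ℤ G} (h : A ≤ B) : satAux A ≤ satAux B := by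
  rintro x ⟨k, hk, hkx⟩; exact ⟨k, hk, h hkx⟩

lemma satAux_saturated {A : Submodule ℤ G} {k : ℤ} {x : G} (hk : k ≠ 0)
    (h : k • x ∈ satAux A) : x ∈ satAux A := by
  obtain ⟨l, hl, hlx⟩ := h
  exact ⟨l * k, mul_ne_zero hl hk, by rwa [mul_smul]⟩

lemma noZeroSMulDivisors_quotient_satAux (A : Submodule ℤ G) :
    NoZeroSMulDivisors ℤ (G ⧸ satAux A) := by
  constructor
  intro k x h
  by_cases hk : k = 0
  · exact Or.inl hk
  · right
    obtain ⟨y, rfl⟩ := Submodule.Quotient.mk_surjective _ x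
    rw [← Submodule.Quotient.mk_smul, Submodule.Quotient.mk_eq_zero] at h
    rw [Submodule.Quotient.mk_eq_zero]
    exact satAux_saturated hk h

omit [AddCommGroup G] in
lemma set_finite_of_bound {t : Set G} {n : ℕ}
    (h : ∀ s : Finset G, ↑s ⊆ t → s.card ≤ n) : t.Finite := by
  by_contra hinf
  obtain ⟨s, hs, hcard⟩ := Set.Infinite.exists_subset_card_eq hinf (n + 1)
  have := h s hs
  omega

/-- Transfer freeness between a submodule and its additive subgroup coercion. -/
lemma free_of_toAddSubgroup {N : Submodule ℤ G}
    (h : Module.Free ℤ N.toAddSubgroup) : Module.Free ℤ N := by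
  refine Module.Free.of_equiv (M := ↥N.toAddSubgroup)
    (AddEquiv.toIntLinearEquiv ?_)
  exact { toFun := fun x => ⟨x.1, x.2⟩, invFun := fun x => ⟨x.1, x.2⟩,
          left_inv := fun _ => rfl, right_inv := fun _ => rfl,
          map_add' := fun _ _ => rfl }

lemma free_toAddSubgroup_of {H : AddSubgroup G}
    (h : Module.Free ℤ (AddSubgroup.toIntSubmodule H)) : Module.Free ℤ H := by
  refine Module.Free.of_equiv (M := ↥(AddSubgroup.toIntSubmodule H))
    (AddEquiv.toIntLinearEquiv ?_)
  exact { toFun := fun x => ⟨x.1, x.2⟩, invFun := fun x => ⟨x.1, x.2⟩,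
          left_inv := fun _ => rfl, right_inv := fun _ => rfl,
          map_add' := fun _ _ => rfl }

lemma exists_basis_extend {N N' : Submodule ℤ G} (hNN' : N ≤ N')
    (hQ : Module.Free ℤ (N'.map N.mkQ)) {B : Set G}
    (hBi : LinearIndependent ℤ ((↑) : B → G)) (hBs : span ℤ B = N) :
    ∃ B' : Set G, B ⊆ B' ∧ LinearIndependent ℤ ((↑) : B' → G) ∧ span ℤ B' = N' := by
  classical
  set Q : Submodule ℤ (G ⧸ N) := N'.map N.mkQ with hQdef
  letI := hQ
  set b := Module.Free.chooseBasis ℤ Q with hb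
  set ι := Module.Free.ChooseBasisIndex ℤ Q
  have hlift : ∀ i : ι, ∃ x : G, x ∈ N' ∧ N.mkQ x = (b i : G ⧸ N) := by
    intro i
    obtain ⟨x, hx, hx'⟩ := (b i).2
    exact ⟨x, hx, hx'⟩
  choose c hc1 hc2 using hlift
  have hbG : LinearIndependent ℤ (fun i : ι => ((b i : Q) : G ⧸ N)) :=
    b.linearIndependent.map' Q.subtype (Submodule.ker_subtype Q)
  have hmkc : (⇑N.mkQ) ∘ c = fun i : ι => ((b i : Q) : G ⧸ N) := funext fun i => hc2 i
  have hcind : LinearIndependent ℤ c := by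
    apply LinearIndependent.of_comp N.mkQ
    rw [hmkc]; exact hbG
  have hdisj : Disjoint (span ℤ B) (span ℤ (Set.range c)) := by
    rw [hBs, disjoint_def]
    intro x hxN hxC
    rw [Finsupp.mem_span_range_iff_exists_finsupp] at hxC
    obtain ⟨l, hl⟩ := hxC
    have h0 : N.mkQ x = 0 := (Submodule.Quotient.mk_eq_zero N).mpr hxN
    have e1 : (l.sum fun i a => a • (b i)) = (0 : Q) := by
      apply Subtype.val_injective
      have h1 : Q.subtype (l.sum fun i a => a • b i)
          = l.sum fun i a => a • ((b i : Q) : G ⧸ N) := by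
        rw [map_finsuppSum]; simp
      have h2 : N.mkQ x = l.sum fun i a => a • ((b i : Q) : G ⧸ N) := by
        rw [← hl, map_finsuppSum]; simp [hc2]
      have h3 : Q.subtype (l.sum fun i a => a • b i) = 0 := by rw [h1, ← h2, h0]
      simpa using h3
    have hl0 : l = 0 := by
      have h3 := linearIndependent_iff.mp b.linearIndependent l
      rw [Finsupp.linearCombination_apply] at h3
      exact h3 e1
    rw [← hl, hl0, Finsupp.sum_zero_index]
  have hCind : LinearIndependent ℤ ((↑) : Set.range c → G) := hcind.linearIndepOn_id
  have hBCind : LinearIndependent ℤ ((↑) : ↥(B ∪ Set.range c) → G) := LinearIndepOn.id_union hBi hCind hdisj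
  refine ⟨B ∪ Set.range c, Set.subset_union_left, hBCind, ?_⟩
  rw [span_union, hBs]
  apply le_antisymm
  · refine sup_le hNN' ?_
    rw [span_le]
    rintro x ⟨i, rfl⟩; exact hc1 i
  · intro x hx
    have hmk : N.mkQ x ∈ span ℤ (Set.range ((⇑N.mkQ) ∘ c)) := by
      rw [hmkc]
      have hq : (⟨N.mkQ x, Submodule.mem_map_of_mem hx⟩ : Q) ∈ span ℤ (Set.range b) := by
        rw [b.span_eq]; trivial
      have h5 := Submodule.mem_map_of_mem (f := Q.subtype) hq
      rw [Submodule.map_span, ← Set.range_comp] at h5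
      exact h5
    rw [Set.range_comp, ← Submodule.map_span] at hmk
    obtain ⟨y, hy, hyx⟩ := hmk
    have hxy : x - y ∈ N := by
      rw [← Submodule.ker_mkQ N, LinearMap.mem_ker, map_sub, hyx, sub_self]
    rw [Submodule.mem_sup]
    exact ⟨x - y, hxy, y, hy, by abel⟩

lemma free_of_chain (S : ℕ → Submodule ℤ G) (h0 : S 0 = ⊥)
    (hle : ∀ n, S n ≤ S (n + 1))
    (hfree : ∀ n, Module.Free ℤ ((S (n + 1)).map (S n).mkQ))
    (htop : ∀ x : G, ∃ n, x ∈ S n) : Module.Free ℤ G := by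
  classical
  let D : ℕ → Type _ := fun n =>
    {B : Set G // LinearIndependent ℤ ((↑) : B → G) ∧ span ℤ B = S n}
  have base : D 0 := ⟨∅, linearIndependent_empty ℤ G, by rw [span_empty, h0]⟩
  let step : (n : ℕ) → (B : D n) → {p : D (n + 1) // B.1 ⊆ p.1} := fun n B =>
    let h := exists_basis_extend (hle n) (hfree n) B.2.1 B.2.2
    ⟨⟨Classical.choose h, (Classical.choose_spec h).2.1, (Classical.choose_spec h).2.2⟩,
      (Classical.choose_spec h).1⟩
  let F : ∀ n, D n := fun n => Nat.rec base (fun n ih => (step n ih).1) n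
  have hmono : ∀ n, (F n).1 ⊆ (F (n + 1)).1 := fun n => (step n (F n)).2
  have hchain : Monotone fun n => (F n).1 := monotone_nat_of_le_succ hmono
  have hdir : Directed (· ⊆ ·) fun n => (F n).1 := hchain.directed_le
  have hind : LinearIndependent ℤ ((↑) : (⋃ n, (F n).1) → G) :=
    linearIndepOn_iUnion_of_directed (v := id) hdir fun n => (F n).2.1
  have hspan : span ℤ (⋃ n, (F n).1) = ⊤ := by
    rw [eq_top_iff]
    intro x _
    obtain ⟨n, hn⟩ := htop x
    have : S n ≤ span ℤ (⋃ n, (F n).1) := by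
      rw [← (F n).2.2]
      exact span_mono (Set.subset_iUnion (fun n => (F n).1) n)
    exact this hn
  exact Module.Free.of_basis (Module.Basis.mk hind (by rw [Subtype.range_coe, hspan]))

lemma card_le_of_indep_satAux {w : Finset G} (s : Finset G)
    (hs : ↑s ⊆ (satAux (span ℤ (w : Set G)) : Set G))
    (hind : LinearIndependent ℤ (fun x : (s : Set G) => (x : G))) : s.card ≤ w.card := by
  classical
  have hch : ∀ x : (s : Set G), ∃ k : ℤ, k ≠ 0 ∧ k • (x : G) ∈ span ℤ (w : Set G) :=
    fun x => hs x.2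
  choose k hk hkw using hch
  set v := fun x : (s : Set G) => k x • (x : G) with hv
  have hvind : LinearIndependent ℤ v := by
    rw [linearIndependent_iff']
    intro t g hsum i hi
    have h2 : ∑ j ∈ t, (g j * k j) • (j : G) = 0 := by
      rw [← hsum]
      exact Finset.sum_congr rfl fun j _ => by rw [hv, mul_smul]
    have h3 := linearIndependent_iff'.mp hind t (fun j => g j * k j) h2 i hi
    rcases mul_eq_zero.mp h3 with h | h
    · exact h
    · exact absurd h (hk i)
  have hrange : Set.range v ≤ (span ℤ (w : Set G) : Set G) := by
    rintro x ⟨i, rfl⟩; exact hkw i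
  have := linearIndependent_le_span' v hvind (w : Set G) hrange
  rw [Finset.coe_sort_coe, Cardinal.mk_coe_finset] at this
  have hcard : Fintype.card (w : Set G) = w.card := Fintype.card_coe w
  rw [hcard] at this
  exact_mod_cast this

lemma moduleFinite_of_free_of_bound {N : Submodule ℤ G} (hfree : Module.Free ℤ N) {n : ℕ}
    (hb : ∀ s : Finset G, ↑s ⊆ (N : Set G) →
      LinearIndependent ℤ (fun x : (s : Set G) => (x : G)) → s.card ≤ n) :
    Module.Finite ℤ N := by
  letI := hfree
  set bas := Module.Free.chooseBasis ℤ N with hbas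
  set ι := Module.Free.ChooseBasisIndex ℤ N
  have hv : LinearIndependent ℤ (fun i : ι => ((bas i : N) : G)) :=
    bas.linearIndependent.map' N.subtype (Submodule.ker_subtype N)
  have hinj : Function.Injective (fun i : ι => ((bas i : N) : G)) := hv.injective
  have hfin : Finite ι := by
    by_contra h
    rw [not_finite_iff_infinite] at h
    have hrange : (Set.range fun i : ι => ((bas i : N) : G)).Infinite :=
      Set.infinite_range_of_injective hinj
    apply hrange
    apply set_finite_of_bound (n := n)
    intro s hsr
    refine hb s (fun x hx => ?_) (hv.linearIndepOn_id.mono hsr)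
    obtain ⟨i, rfl⟩ := hsr hx
    exact (bas i).2
  exact Module.Finite.of_basis bas

end Aux

/-- A subgroup has finite rank if there is a finite bound on the cardinality of
ℤ-linearly independent subsets of it. -/
def FiniteRankSubgroup {G : Type*} [AddCommGroup G] (H : AddSubgroup G) : Prop :=
  ∃ n : ℕ, ∀ s : Finset G, (↑s : Set G) ⊆ (H : Set G) →
    LinearIndependent ℤ (fun x : (s : Set G) => (x : G)) → s.card ≤ n

theorem stmt_11 (G : Type*) [AddCommGroup G] [Countable G]
    [NoZeroSMulDivisors ℤ G] :
    Module.Free ℤ G ↔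
      ∀ H : AddSubgroup G, FiniteRankSubgroup H → Module.Free ℤ H := by
  classical
  constructor
  · -- forward direction
    intro hfree H hH
    obtain ⟨n, hn⟩ := hH
    letI := hfree
    set b := Module.Free.chooseBasis ℤ G with hbdef
    set ι := Module.Free.ChooseBasisIndex ℤ G
    obtain ⟨I, hIind, hImax⟩ := exists_maximal_linearIndepOn ℤ ((↑) : ↥(H : Set G) → G)
    set J : Set G := Subtype.val '' I with hJ
    have hJH : J ⊆ (H : Set G) := by rintro x ⟨i, _, rfl⟩; exact i.2
    have hJind : LinearIndependent ℤ ((↑) : J → G) := by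
      rw [hJ, Set.image_eq_range]
      exact LinearIndependent.linearIndepOn_id hIind
    have hJfin : J.Finite :=
      set_finite_of_bound (n := n) fun s hs => hn s (hs.trans hJH) (LinearIndepOn.mono (v := id) (s := J) hJind hs)
    have hsat : ∀ x : G, x ∈ H → ∃ a : ℤ, a ≠ 0 ∧ a • x ∈ span ℤ J := by
      intro x hx
      by_cases hmem : (⟨x, hx⟩ : (H : Set G)) ∈ I
      · exact ⟨1, one_ne_zero, by simpa using subset_span (Set.mem_image_of_mem _ hmem)⟩
      · obtain ⟨a, ha, hmem'⟩ := hImax _ hmem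
        exact ⟨a, ha, hmem'⟩
    set T : Set ι := ⋃ x ∈ J, ↑((b.repr x).support) with hT
    have hTfin : T.Finite := hJfin.biUnion fun x _ => (b.repr x).support.finite_toSet
    haveI : Finite ↥T := hTfin.to_subtype
    have hNle : AddSubgroup.toIntSubmodule H ≤ span ℤ (⇑b '' T) := by
      intro x hx
      replace hx : x ∈ H := hx
      obtain ⟨a, ha, haspan⟩ := hsat x hx
      have h1 : span ℤ J ≤ span ℤ (⇑b '' T) := by
        rw [span_le]
        intro y hy
        rw [SetLike.mem_coe, Module.Basis.mem_span_image]
        exact fun i hi => Set.mem_biUnion hy hi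
      have h2 := h1 haspan
      rw [Module.Basis.mem_span_image] at h2
      rw [map_smul, Finsupp.support_smul_eq ha] at h2
      rw [Module.Basis.mem_span_image]
      exact h2
    apply free_toAddSubgroup_of
    have hbT : LinearIndependent ℤ (fun i : T => b i) :=
      b.linearIndependent.comp _ Subtype.coe_injective
    have hle' : AddSubgroup.toIntSubmodule H ≤ span ℤ (Set.range fun i : T => b i) := by
      rwa [← Set.image_eq_range]
    obtain ⟨m, bas⟩ := Submodule.basisOfPidOfLESpan hbT hle'
    exact Module.Free.of_basis bas
  · -- reverse direction
    intro hH
    have hne : Nonempty G := ⟨0⟩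
    obtain ⟨f, hf⟩ := exists_surjective_nat G
    set S : ℕ → Submodule ℤ G :=
      fun n => satAux (span ℤ (((Finset.range n).image f : Finset G) : Set G)) with hS
    have hbound : ∀ n (s : Finset G), ↑s ⊆ (S n : Set G) →
        LinearIndependent ℤ (fun x : (s : Set G) => (x : G)) → s.card ≤ n := by
      intro n s hs hind
      have := card_le_of_indep_satAux s hs hind
      calc s.card ≤ ((Finset.range n).image f).card := this
        _ ≤ (Finset.range n).card := Finset.card_image_le
        _ = n := Finset.card_range n
    have hSfree : ∀ n, Module.Free ℤ (S n) := by
      intro n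
      apply free_of_toAddSubgroup
      apply hH
      exact ⟨n, fun s hs hind => hbound n s (by simpa using hs) hind⟩
    have hSfin : ∀ n, Module.Finite ℤ (S n) :=
      fun n => moduleFinite_of_free_of_bound (hSfree n) (hbound n)
    apply free_of_chain S
    · rw [hS]
      simp only [Finset.range_zero, Finset.image_empty, Finset.coe_empty, span_empty]
      ext x
      simp only [mem_satAux, Submodule.mem_bot]
      constructor
      · rintro ⟨k, hk, hkx⟩
        rcases smul_eq_zero.mp hkx with h | h
        · exact absurd (by exact_mod_cast h) hk
        · exact h
      · rintro rfl
        exact ⟨1, one_ne_zero, by simp⟩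
    · intro n
      apply satAux_mono
      apply span_mono
      intro x hx
      simp only [Finset.coe_image, Finset.coe_range] at hx ⊢
      obtain ⟨m, hm, rfl⟩ := hx
      exact ⟨m, lt_trans hm (Nat.lt_succ_self n), rfl⟩
    · intro n
      haveI h1 : NoZeroSMulDivisors ℤ (G ⧸ S n) :=
        noZeroSMulDivisors_quotient_satAux _
      haveI h2 : NoZeroSMulDivisors ℤ ((S (n + 1)).map (S n).mkQ) :=
        Function.Injective.noZeroSMulDivisors _ Subtype.val_injective rfl fun _ _ => rfl
      haveI h3 : Module.Finite ℤ ((S (n + 1)).map (S n).mkQ) := by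
        haveI := hSfin (n + 1)
        exact Module.Finite.iff_fg.mpr (Submodule.FG.map _ (Module.Finite.iff_fg.mp (hSfin (n + 1))))
      exact Module.free_of_finite_type_torsion_free'
    · intro x
      obtain ⟨m, rfl⟩ := hf x
      refine ⟨m + 1, le_satAux _ (subset_span ?_)⟩
      simp only [Finset.coe_image, Finset.coe_range]
      exact ⟨m, Nat.lt_succ_self m, rfl⟩
end
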